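/- Let k ∈ {1,…,n} and suppose λ*(T_k) < 0. Then for every real t with T_k ≤ t < T_{k+1} (where T_{n+1} = +∞), one has λ*(t) > 0 if and only if t > T_k*, and λ*(t) < 0 if and only if t < T_k*. -/
import Mathlib


/-- The underlying intensity function of an exponential Hawkes process:
`λ*(t) = λ0 + Σ_{i=1}^{n} α·exp(−β(t − T_i))·𝟙{T_i ≤ t}`. -/
noncomputable def lamStar (l0 a b : ℝ) (n : ℕ) (T : ℕ → ℝ) (t : ℝ) : ℝ :=
  l0 + ∑ i ∈ Finset.Icc 1 n, if T i ≤ t then a * Real.exp (-b * (t - T i)) else 0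

/-- The restart time `T_k*`: equal to `T_k + β⁻¹·log((λ0 − λ*(T_k))/λ0)` if
`λ*(T_k) < 0`, and to `T_k` otherwise. -/
noncomputable def restart (l0 a b : ℝ) (n : ℕ) (T : ℕ → ℝ) (k : ℕ) : ℝ :=
  if lamStar l0 a b n T (T k) < 0 then
    T k + b⁻¹ * Real.log ((l0 - lamStar l0 a b n T (T k)) / l0)
  else T k

private lemma aux_pos (l0 c b s : ℝ) (hl0 : 0 < l0) (hc : 0 < c) (hb : 0 < b) :
    0 < l0 - c * Real.exp (-b * s) ↔ b⁻¹ * Real.log (c / l0) < s := by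
  have h1 : 0 < l0 - c * Real.exp (-b * s) ↔ Real.exp (-b * s) < l0 / c := by
    rw [lt_div_iff₀ hc]
    constructor <;> intro h <;> nlinarith
  rw [h1, ← Real.exp_log (show (0:ℝ) < l0 / c by positivity), Real.exp_lt_exp]
  have hlog : Real.log (l0 / c) = -Real.log (c / l0) := by
    rw [← Real.log_inv, inv_div]
  rw [hlog]
  constructor
  · intro h
    have hbs : Real.log (c / l0) < b * s := by linarith
    calc b⁻¹ * Real.log (c / l0) < b⁻¹ * (b * s) := by
          apply mul_lt_mul_of_pos_left hbs (by positivity)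
      _ = s := by field_simp
  · intro h
    have : b * (b⁻¹ * Real.log (c / l0)) < b * s := mul_lt_mul_of_pos_left h hb
    rw [← mul_assoc, mul_inv_cancel₀ hb.ne', one_mul] at this
    linarith

private lemma aux_neg (l0 c b s : ℝ) (hl0 : 0 < l0) (hc : 0 < c) (hb : 0 < b) :
    l0 - c * Real.exp (-b * s) < 0 ↔ s < b⁻¹ * Real.log (c / l0) := by
  have h1 : l0 - c * Real.exp (-b * s) < 0 ↔ l0 / c < Real.exp (-b * s) := by
    rw [div_lt_iff₀ hc]
    constructor <;> intro h <;> nlinarith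
  rw [h1, ← Real.exp_log (show (0:ℝ) < l0 / c by positivity), Real.exp_lt_exp]
  have hlog : Real.log (l0 / c) = -Real.log (c / l0) := by
    rw [← Real.log_inv, inv_div]
  rw [hlog]
  constructor
  · intro h
    have : b * s < b * (b⁻¹ * Real.log (c / l0)) := by
      rw [← mul_assoc, mul_inv_cancel₀ hb.ne', one_mul]; linarith
    exact lt_of_mul_lt_mul_left this hb.le
  · intro h
    have := mul_lt_mul_of_pos_left h hb
    rw [← mul_assoc, mul_inv_cancel₀ hb.ne', one_mul] at this
    linarith

/-- If `λ*(T_k) < 0`, then for every `t` with `T_k ≤ t < T_{k+1}` (with `T_{n+1} = +∞`),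
one has `λ*(t) > 0 ↔ t > T_k*` and `λ*(t) < 0 ↔ t < T_k*`. -/
theorem stmt3 (l0 a b : ℝ) (hl0 : 0 < l0) (hb : 0 < b) (n : ℕ) (hn : 1 ≤ n)
    (T : ℕ → ℝ) (hT0 : T 0 = 0) (hT : ∀ i, i < n → T i < T (i + 1))
    (k : ℕ) (hk1 : 1 ≤ k) (hk2 : k ≤ n)
    (hneg : lamStar l0 a b n T (T k) < 0) :
    ∀ t : ℝ, T k ≤ t → (k < n → t < T (k + 1)) →
      (0 < lamStar l0 a b n T t ↔ restart l0 a b n T k < t) ∧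
      (lamStar l0 a b n T t < 0 ↔ t < restart l0 a b n T k) := by
  have hmono : ∀ j, j ≤ n → ∀ i, i ≤ j → T i ≤ T j := by
    intro j
    induction j with
    | zero => intro _ i hi; have : i = 0 := Nat.le_zero.mp hi; simp [this]
    | succ m ih =>
        intro hm i hi
        rcases Nat.lt_or_ge i (m + 1) with h | h
        · have h1 : T i ≤ T m := ih (by omega) i (by omega)
          have h2 : T m < T (m + 1) := hT m (by omega)
          linarith
        · have : i = m + 1 := by omega
          subst this; rfl
  intro t ht htlt
  -- key sum identity
  have eq1 : lamStar l0 a b n T t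
      = l0 + Real.exp (-b * (t - T k)) * (lamStar l0 a b n T (T k) - l0) := by
    unfold lamStar
    rw [add_sub_cancel_left, Finset.mul_sum]
    congr 1
    apply Finset.sum_congr rfl
    intro i hi
    simp only [Finset.mem_Icc] at hi
    by_cases h : T i ≤ T k
    · rw [if_pos h, if_pos (h.trans ht)]
      have harg : -b * (t - T i) = -b * (t - T k) + -b * (T k - T i) := by ring
      rw [harg, Real.exp_add]; ring
    · have hki : k < i := by
        by_contra hc
        exact h (hmono k hk2 i (by omega))
      have hkn : k < n := by omega
      have hTi : T (k + 1) ≤ T i := hmono i hi.2 (k + 1) (by omega)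
      have hnt : ¬ T i ≤ t := by
        have := htlt hkn
        linarith
      rw [if_neg hnt, if_neg h, mul_zero]
  set L := lamStar l0 a b n T (T k) with hL
  have hc : 0 < l0 - L := by linarith
  have hr : restart l0 a b n T k = T k + b⁻¹ * Real.log ((l0 - L) / l0) := by
    rw [restart, if_pos hneg]
  have hval : lamStar l0 a b n T t = l0 - (l0 - L) * Real.exp (-b * (t - T k)) := by
    rw [eq1]; ring
  constructor
  · rw [hval, aux_pos l0 (l0 - L) b (t - T k) hl0 hc hb, hr]
    constructor <;> intro <;> linarith
  · rw [hval, aux_neg l0 (l0 - L) b (t - T k) hl0 hc hb, hr]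
    constructor <;> intro <;> linarith
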